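/- Let (H, β) be a Hom-Hopf algebra with β bijective, V a linear space with ζ_V bijective, and suppose (H ⊗ V, β ⊗ ζ_V) with left structures h·(g ⊗ v) = hg ⊗ ζ_V(v), ρ^l(g ⊗ v) = g_1 ⊗ g_2 ⊗ ζ_V(v), right action (g ⊗ v)·h = gβ^{-1}(h_1) ⊗ v ◁ β^{-1}(h_2) and right coaction ρ^r(g ⊗ v) = g_1 ⊗ v_{(0)} ⊗ β^{-1}(g_2 v_{(1)}) (coming from a right H-module and right H-comodule structure on V) is a four-angle H-Hopf module. Then (V, ζ_V, ◁, ρ) is a right-right Yetter-Drinfel'd module. -/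

import Mathlib

open TensorProduct

namespace HomHopf

variable (k : Type) [Field k]

/-- A Hom-algebra. -/
structure HomAlg (A : Type) [AddCommGroup A] [Module k A] : Type where
  mul : A →ₗ[k] A →ₗ[k] A
  one : A
  zmap : A →ₗ[k] A
  zmap_mul : ∀ a b, zmap (mul a b) = mul (zmap a) (zmap b)
  hom_assoc : ∀ a b c, mul (zmap a) (mul b c) = mul (mul a b) (zmap c)
  zmap_one : zmap one = one
  one_mul : ∀ a, mul one a = zmap a
  mul_one : ∀ a, mul a one = zmap a

/-- A Hom-bialgebra. -/
structure Bialg (H : Type) [AddCommGroup H] [Module k H] : Type where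
  mul : H →ₗ[k] H →ₗ[k] H
  one : H
  comul : H →ₗ[k] H ⊗[k] H
  counit : H →ₗ[k] k
  bmap : H →ₗ[k] H
  bmap_mul : ∀ a b, bmap (mul a b) = mul (bmap a) (bmap b)
  hom_assoc : ∀ a b c, mul (bmap a) (mul b c) = mul (mul a b) (bmap c)
  bmap_one : bmap one = one
  one_mul : ∀ a, mul one a = bmap a
  mul_one : ∀ a, mul a one = bmap a
  comul_bmap : ∀ c, comul (bmap c) = TensorProduct.map bmap bmap (comul c)
  coassoc : ∀ c, TensorProduct.map bmap comul (comul c)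
      = TensorProduct.assoc k H H H (TensorProduct.map comul bmap (comul c))
  counit_bmap : ∀ c, counit (bmap c) = counit c
  counit_comul : ∀ c,
      TensorProduct.lid k H (TensorProduct.map counit LinearMap.id (comul c)) = bmap c
  comul_counit : ∀ c,
      TensorProduct.rid k H (TensorProduct.map LinearMap.id counit (comul c)) = bmap c
  comul_mul : ∀ a b, comul (mul a b) = TensorProduct.map₂ mul mul (comul a) (comul b)
  comul_one : comul one = one ⊗ₜ[k] one
  counit_mul : ∀ a b, counit (mul a b) = counit a * counit b
  counit_one : counit one = 1

/-- A Hom-Hopf algebra. -/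
structure Hopf (H : Type) [AddCommGroup H] [Module k H] extends Bialg k H where
  S : H →ₗ[k] H
  S_mul_id : ∀ h,
      TensorProduct.lift mul (TensorProduct.map S LinearMap.id (comul h)) = counit h • one
  id_mul_S : ∀ h,
      TensorProduct.lift mul (TensorProduct.map LinearMap.id S (comul h)) = counit h • one
  S_bmap : ∀ h, S (bmap h) = bmap (S h)

variable {H : Type} [AddCommGroup H] [Module k H]
variable {M N P V W U : Type}
  [AddCommGroup M] [Module k M] [AddCommGroup N] [Module k N]
  [AddCommGroup P] [Module k P] [AddCommGroup V] [Module k V]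
  [AddCommGroup W] [Module k W] [AddCommGroup U] [Module k U]

/-- Left Hom-module. -/
structure IsLMod (A : Bialg k H) (ζ : M →ₗ[k] M) (act : H →ₗ[k] M →ₗ[k] M) : Prop where
  assoc : ∀ a b m, act (A.bmap a) (act b m) = act (A.mul a b) (ζ m)
  zeta_act : ∀ a m, ζ (act a m) = act (A.bmap a) (ζ m)
  one_act : ∀ m, act A.one m = ζ m

/-- Right Hom-module. -/
structure IsRMod (A : Bialg k H) (ζ : M →ₗ[k] M) (ract : M →ₗ[k] H →ₗ[k] M) : Prop where
  assoc : ∀ m a b, ract (ract m a) (A.bmap b) = ract (ζ m) (A.mul a b)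
  zeta_act : ∀ m a, ζ (ract m a) = ract (ζ m) (A.bmap a)
  act_one : ∀ m, ract m A.one = ζ m

/-- Left Hom-module over a plain Hom-algebra structure (given by raw data). -/
structure IsLModOf {A : Type} [AddCommGroup A] [Module k A]
    (mul : A →ₗ[k] A →ₗ[k] A) (one : A) (zmap : A →ₗ[k] A)
    (ζ : M →ₗ[k] M) (act : A →ₗ[k] M →ₗ[k] M) : Prop where
  assoc : ∀ a b m, act (zmap a) (act b m) = act (mul a b) (ζ m)
  zeta_act : ∀ a m, ζ (act a m) = act (zmap a) (ζ m)
  one_act : ∀ m, act one m = ζ m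

/-- Right Hom-module over a plain Hom-algebra structure. -/
structure IsRModOf {A : Type} [AddCommGroup A] [Module k A]
    (mul : A →ₗ[k] A →ₗ[k] A) (one : A) (zmap : A →ₗ[k] A)
    (ζ : M →ₗ[k] M) (ract : M →ₗ[k] A →ₗ[k] M) : Prop where
  assoc : ∀ m a b, ract (ract m a) (zmap b) = ract (ζ m) (mul a b)
  zeta_act : ∀ m a, ζ (ract m a) = ract (ζ m) (zmap a)
  act_one : ∀ m, ract m one = ζ m

/-- Left Hom-comodule. -/
structure IsLCom (A : Bialg k H) (ζ : M →ₗ[k] M) (ρ : M →ₗ[k] H ⊗[k] M) : Prop where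
  coact_zeta : ∀ m, ρ (ζ m) = TensorProduct.map A.bmap ζ (ρ m)
  counit_coact : ∀ m, TensorProduct.lid k M (TensorProduct.map A.counit LinearMap.id (ρ m)) = ζ m
  coassoc : ∀ m, TensorProduct.map A.bmap ρ (ρ m)
      = TensorProduct.assoc k H H M (TensorProduct.map A.comul ζ (ρ m))

/-- Right Hom-comodule. -/
structure IsRCom (A : Bialg k H) (ζ : M →ₗ[k] M) (ρ : M →ₗ[k] M ⊗[k] H) : Prop where
  coact_zeta : ∀ m, ρ (ζ m) = TensorProduct.map ζ A.bmap (ρ m)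
  coact_counit : ∀ m, TensorProduct.rid k M (TensorProduct.map LinearMap.id A.counit (ρ m)) = ζ m
  coassoc : ∀ m, TensorProduct.map ρ A.bmap (ρ m)
      = (TensorProduct.assoc k M H H).symm (TensorProduct.map ζ A.comul (ρ m))

/-- `(h·m)_{[-1]} ⊗ (h·m)_{[0]} = h_1 m_{[-1]} ⊗ h_2 · m_{[0]}`. -/
def LLcompat (A : Bialg k H) (act : H →ₗ[k] M →ₗ[k] M) (ρ : M →ₗ[k] H ⊗[k] M) : Prop :=
  ∀ h m, ρ (act h m) = TensorProduct.map₂ A.mul act (A.comul h) (ρ m)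

/-- `(h·m)_{(0)} ⊗ (h·m)_{(1)} = h_1 · m_{(0)} ⊗ h_2 m_{(1)}`. -/
def LRcompat (A : Bialg k H) (act : H →ₗ[k] M →ₗ[k] M) (ρ : M →ₗ[k] M ⊗[k] H) : Prop :=
  ∀ h m, ρ (act h m) = TensorProduct.map₂ act A.mul (A.comul h) (ρ m)

/-- `(m·h)_{[-1]} ⊗ (m·h)_{[0]} = m_{[-1]} h_1 ⊗ m_{[0]} · h_2`. -/
def RLcompat (A : Bialg k H) (ract : M →ₗ[k] H →ₗ[k] M) (ρ : M →ₗ[k] H ⊗[k] M) : Prop :=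
  ∀ m h, ρ (ract m h) = TensorProduct.map₂ A.mul ract (ρ m) (A.comul h)

/-- `(m·h)_{(0)} ⊗ (m·h)_{(1)} = m_{(0)} · h_1 ⊗ m_{(1)} h_2`. -/
def RRcompat (A : Bialg k H) (ract : M →ₗ[k] H →ₗ[k] M) (ρ : M →ₗ[k] M ⊗[k] H) : Prop :=
  ∀ m h, ρ (ract m h) = TensorProduct.map₂ ract A.mul (ρ m) (A.comul h)

/-- Four-angle H-Hopf module. -/
structure IsFourAngle (A : Hopf k H) (ζ : M →ₗ[k] M)
    (lact : H →ₗ[k] M →ₗ[k] M) (ract : M →ₗ[k] H →ₗ[k] M)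
    (ρl : M →ₗ[k] H ⊗[k] M) (ρr : M →ₗ[k] M ⊗[k] H) : Prop where
  lmod : IsLMod k A.toBialg ζ lact
  rmod : IsRMod k A.toBialg ζ ract
  bimod : ∀ a m b, lact (A.bmap a) (ract m b) = ract (lact a m) (A.bmap b)
  lcom : IsLCom k A.toBialg ζ ρl
  rcom : IsRCom k A.toBialg ζ ρr
  bicom : ∀ m, TensorProduct.map A.bmap ρr (ρl m)
      = TensorProduct.assoc k H M H (TensorProduct.map ρl A.bmap (ρr m))
  cll : LLcompat k A.toBialg lact ρl
  clr : LRcompat k A.toBialg lact ρr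
  crl : RLcompat k A.toBialg ract ρl
  crr : RRcompat k A.toBialg ract ρr

/-- Yetter–Drinfel'd compatibility, stated via arbitrary finite representations of `Δ(h)`. -/
def ydCompat (A : Bialg k H) (ract : V →ₗ[k] H →ₗ[k] V) (ρ : V →ₗ[k] V ⊗[k] H) : Prop :=
  ∀ (v : V) (h : H) (ι : Type) (s : Finset ι) (h1 h2 : ι → H),
    A.comul h = ∑ i ∈ s, h1 i ⊗ₜ[k] h2 i →
    ∑ i ∈ s, TensorProduct.map LinearMap.id (A.mul (A.bmap (A.bmap (h1 i))))
        (ρ (ract v (h2 i)))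
      = ∑ i ∈ s, TensorProduct.map (ract.flip (A.bmap (h1 i)))
          (((A.mul.flip (A.bmap (A.bmap (h2 i)))).comp A.bmap)) (ρ v)

/-- Right-right Yetter–Drinfel'd module. -/
structure IsYD (A : Hopf k H) (ζ : V →ₗ[k] V)
    (ract : V →ₗ[k] H →ₗ[k] V) (ρ : V →ₗ[k] V ⊗[k] H) : Prop where
  rmod : IsRMod k A.toBialg ζ ract
  rcom : IsRCom k A.toBialg ζ ρ
  compat : ydCompat k A.toBialg ract ρ

/-- The braiding `c_{V,W}(v ⊗ w) = ζ_W⁻¹(w_(0)) ⊗ ζ_V⁻¹(v) ◁ β⁻²(w_(1))`. -/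
noncomputable def braid (ract : V →ₗ[k] H →ₗ[k] V) (ζVinv : V →ₗ[k] V)
    (ρ : W →ₗ[k] W ⊗[k] H) (ζWinv : W →ₗ[k] W) (βinv : H →ₗ[k] H) :
    V ⊗[k] W →ₗ[k] W ⊗[k] V :=
  (TensorProduct.map LinearMap.id (TensorProduct.lift (ract.comp ζVinv))).comp
    ((TensorProduct.leftComm k V W H).toLinearMap.comp
      (TensorProduct.map LinearMap.id ((TensorProduct.map ζWinv (βinv.comp βinv)).comp ρ)))

/-- The action on the tensor product of two YD modules:
`(v ⊗ w) ◁ h = v ◁ β⁻¹(h_1) ⊗ w ◁ β⁻¹(h_2)`. -/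
noncomputable def ydAct (A : Bialg k H) (βinv : H →ₗ[k] H)
    (ractV : V →ₗ[k] H →ₗ[k] V) (ractW : W →ₗ[k] H →ₗ[k] W) :
    V ⊗[k] W →ₗ[k] H →ₗ[k] V ⊗[k] W :=
  (TensorProduct.map₂ ractV ractW).compl₂ ((TensorProduct.map βinv βinv).comp A.comul)

/-- The coaction on the tensor product of two YD modules:
`ρ(v ⊗ w) = v_(0) ⊗ w_(0) ⊗ β⁻¹(v_(1) w_(1))`. -/
noncomputable def ydCoact (A : Bialg k H) (βinv : H →ₗ[k] H)
    (ρV : V →ₗ[k] V ⊗[k] H) (ρW : W →ₗ[k] W ⊗[k] H) :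
    V ⊗[k] W →ₗ[k] (V ⊗[k] W) ⊗[k] H :=
  (TensorProduct.map LinearMap.id (βinv.comp (TensorProduct.lift A.mul))).comp
    ((TensorProduct.tensorTensorTensorComm k V H W H).toLinearMap.comp
      (TensorProduct.map ρV ρW))


/-- conversely, if the induced structures make `H ⊗ V` a four-angle
H-Hopf module, then `V` is a right-right Yetter–Drinfel'd module. -/
theorem fourAngle_gives_yd (H : Type) [AddCommGroup H] [Module k H]
    (A : Hopf k H) (βe : H ≃ₗ[k] H) (hβ : βe.toLinearMap = A.bmap)
    (V : Type) [AddCommGroup V] [Module k V]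
    (ζVe : V ≃ₗ[k] V) (ractV : V →ₗ[k] H →ₗ[k] V) (ρV : V →ₗ[k] V ⊗[k] H)
    (hmod : IsRMod k A.toBialg ζVe.toLinearMap ractV)
    (hcom : IsRCom k A.toBialg ζVe.toLinearMap ρV)
    (hFA : IsFourAngle k A (TensorProduct.map A.bmap ζVe.toLinearMap)
      (((TensorProduct.mapBilinear (σ₁₂ := RingHom.id k) (M := H) (N := V) (M₂ := H) (N₂ := V)).flip ζVe.toLinearMap).comp A.mul)
      ((TensorProduct.map₂ A.mul ractV).compl₂
        ((TensorProduct.map βe.symm.toLinearMap βe.symm.toLinearMap).comp A.comul))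
      ((TensorProduct.assoc k H H V).toLinearMap.comp
        (TensorProduct.map A.comul ζVe.toLinearMap))
      ((TensorProduct.map LinearMap.id
          (βe.symm.toLinearMap.comp (TensorProduct.lift A.mul))).comp
        ((TensorProduct.tensorTensorTensorComm k H H V H).toLinearMap.comp
          (TensorProduct.map A.comul ρV)))) :
    IsYD k A ζVe.toLinearMap ractV ρV := by
  classical
  have hβi : ∀ x : H, A.bmap (βe.symm x) = x := fun x => by rw [← hβ]; simp
  have hβi' : ∀ x : H, βe.symm (A.bmap x) = x := fun x => by rw [← hβ]; simp
  -- counit identity in summation form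
  have hcounit : ∀ (x : H) (ι' : Type) (S : Finset ι') (a b : ι' → H),
      A.comul x = ∑ q ∈ S, a q ⊗ₜ[k] b q →
      ∑ q ∈ S, A.counit (a q) • b q = A.bmap x := by
    intro x ι' S a b hx
    have hc := A.counit_comul x
    rw [hx] at hc
    simpa [map_sum, TensorProduct.map_tmul, TensorProduct.lid_tmul] using hc
  have hmapinv : ∀ c : H ⊗[k] H,
      TensorProduct.map βe.symm.toLinearMap βe.symm.toLinearMap
        (TensorProduct.map A.bmap A.bmap c) = c := by
    intro c
    rw [← LinearMap.comp_apply, ← TensorProduct.map_comp]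
    have h1 : βe.symm.toLinearMap.comp A.bmap = LinearMap.id := by
      ext x; exact hβi' x
    rw [h1, TensorProduct.map_id, LinearMap.id_apply]
  refine ⟨hmod, hcom, ?_⟩
  intro v h ι s h1 h2 hrep
  obtain ⟨t, ht⟩ := TensorProduct.exists_finset (ρV v)
  set ract : H ⊗[k] V →ₗ[k] H →ₗ[k] H ⊗[k] V :=
    (TensorProduct.map₂ A.mul ractV).compl₂
      ((TensorProduct.map βe.symm.toLinearMap βe.symm.toLinearMap).comp A.comul)
    with hract
  set ρr : H ⊗[k] V →ₗ[k] (H ⊗[k] V) ⊗[k] H :=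
    ((TensorProduct.map LinearMap.id
        (βe.symm.toLinearMap.comp (TensorProduct.lift A.mul))).comp
      ((TensorProduct.tensorTensorTensorComm k H H V H).toLinearMap.comp
        (TensorProduct.map A.comul ρV))) with hρr
  set Φ : (H ⊗[k] V) ⊗[k] H →ₗ[k] V ⊗[k] H :=
    TensorProduct.map ((TensorProduct.lid k V).toLinearMap.comp
      (TensorProduct.map A.counit LinearMap.id)) A.bmap with hΦ
  -- Key computation: Φ ∘ ρr on an elementary tensor
  have S : ∀ (g : H) (w : V), Φ (ρr (g ⊗ₜ[k] w))
      = TensorProduct.map LinearMap.id (A.mul (A.bmap g)) (ρV w) := by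
    intro g w
    obtain ⟨T, hT⟩ := TensorProduct.exists_finset (A.comul g)
    obtain ⟨P, hP⟩ := TensorProduct.exists_finset (ρV w)
    have hg := hcounit g _ T (fun q => q.1) (fun q => q.2) hT
    rw [hρr, hΦ, ← hg]
    simp only [LinearMap.comp_apply, LinearEquiv.coe_coe, TensorProduct.map_tmul, hT, hP,
      TensorProduct.sum_tmul, TensorProduct.tmul_sum, map_sum,
      TensorProduct.tensorTensorTensorComm_tmul, TensorProduct.lift.tmul,
      TensorProduct.lid_tmul, LinearMap.id_apply, hβi, LinearMap.sum_apply,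
      LinearMap.map_smul, LinearMap.smul_apply, TensorProduct.smul_tmul',
      TensorProduct.tmul_smul]
  -- Key computation: counit applied to the first leg of `(1 ⊗ p) ◁ x`
  have Taux : ∀ (x : H) (p1 : V),
      (TensorProduct.lid k V) (TensorProduct.map A.counit LinearMap.id
        (TensorProduct.map₂ A.mul ractV (A.one ⊗ₜ[k] p1) (A.comul x)))
      = ractV p1 (A.bmap x) := by
    intro x p1
    obtain ⟨T, hT⟩ := TensorProduct.exists_finset (A.comul x)
    have hx := hcounit x _ T (fun q => q.1) (fun q => q.2) hT
    rw [hT, ← hx]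
    simp only [map_sum, TensorProduct.map₂_apply_tmul, TensorProduct.map_tmul,
      TensorProduct.lid_tmul, LinearMap.id_apply, A.one_mul, A.counit_bmap,
      LinearMap.map_smul]
  -- compute the right action of β h on 1 ⊗ v
  have act1 : ract (A.one ⊗ₜ[k] v) (A.bmap h)
      = ∑ i ∈ s, A.bmap (h1 i) ⊗ₜ[k] ractV v (h2 i) := by
    rw [hract]
    simp only [LinearMap.compl₂_apply, LinearMap.comp_apply, LinearEquiv.coe_coe,
      A.comul_bmap, hrep, map_sum, TensorProduct.map_tmul, hβi',
      TensorProduct.map₂_apply_tmul, A.one_mul]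
  -- compute ρr (1 ⊗ v)
  have rho1 : ρr (A.one ⊗ₜ[k] v) = ∑ p ∈ t, (A.one ⊗ₜ[k] p.1) ⊗ₜ[k] p.2 := by
    rw [hρr]
    simp only [LinearMap.comp_apply, LinearEquiv.coe_coe, TensorProduct.map_tmul,
      A.comul_one, ht, TensorProduct.tmul_sum, map_sum,
      TensorProduct.tensorTensorTensorComm_tmul, TensorProduct.lift.tmul,
      LinearMap.id_apply, A.one_mul, hβi']
  -- the fully expanded right-hand side
  have hterm : ∀ (i : ι) (p : V × H),
      Φ (TensorProduct.map₂ ract A.mul ((A.one ⊗ₜ[k] p.1) ⊗ₜ[k] p.2)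
          (TensorProduct.map A.bmap A.bmap (h1 i ⊗ₜ[k] h2 i)))
      = ractV p.1 (A.bmap (h1 i)) ⊗ₜ[k] A.mul (A.bmap p.2) (A.bmap (A.bmap (h2 i))) := by
    intro i p
    simp only [TensorProduct.map_tmul, TensorProduct.map₂_apply_tmul, hΦ,
      LinearMap.comp_apply, LinearEquiv.coe_coe]
    congr 1
    · rw [hract]
      simp only [LinearMap.compl₂_apply, LinearMap.comp_apply, A.comul_bmap, hmapinv]
      exact Taux _ _
    · exact A.bmap_mul _ _
  have rhs : Φ (TensorProduct.map₂ ract A.mul (∑ p ∈ t, (A.one ⊗ₜ[k] p.1) ⊗ₜ[k] p.2)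
        (∑ i ∈ s, TensorProduct.map A.bmap A.bmap (h1 i ⊗ₜ[k] h2 i)))
      = ∑ i ∈ s, TensorProduct.map (ractV.flip (A.bmap (h1 i)))
          (((A.mul.flip (A.bmap (A.bmap (h2 i)))).comp A.bmap)) (ρV v) := by
    calc Φ (TensorProduct.map₂ ract A.mul (∑ p ∈ t, (A.one ⊗ₜ[k] p.1) ⊗ₜ[k] p.2)
          (∑ i ∈ s, TensorProduct.map A.bmap A.bmap (h1 i ⊗ₜ[k] h2 i)))
        = ∑ i ∈ s, ∑ p ∈ t, Φ (TensorProduct.map₂ ract A.mul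
            ((A.one ⊗ₜ[k] p.1) ⊗ₜ[k] p.2)
            (TensorProduct.map A.bmap A.bmap (h1 i ⊗ₜ[k] h2 i))) := by
          simp only [map_sum, LinearMap.sum_apply]
      _ = ∑ i ∈ s, ∑ p ∈ t, ractV p.1 (A.bmap (h1 i)) ⊗ₜ[k]
            A.mul (A.bmap p.2) (A.bmap (A.bmap (h2 i))) :=
          Finset.sum_congr rfl fun i _ => Finset.sum_congr rfl fun p _ => hterm i p
      _ = ∑ i ∈ s, TensorProduct.map (ractV.flip (A.bmap (h1 i)))
            (((A.mul.flip (A.bmap (A.bmap (h2 i)))).comp A.bmap)) (ρV v) := by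
          refine Finset.sum_congr rfl fun i _ => ?_
          rw [ht, map_sum]
          exact Finset.sum_congr rfl fun p _ => by
            simp [TensorProduct.map_tmul, LinearMap.flip_apply]
  calc ∑ i ∈ s, TensorProduct.map LinearMap.id
          (A.mul (A.bmap (A.bmap (h1 i)))) (ρV (ractV v (h2 i)))
      = Φ (ρr (∑ i ∈ s, A.bmap (h1 i) ⊗ₜ[k] ractV v (h2 i))) := by
        rw [map_sum, map_sum]
        exact Finset.sum_congr rfl fun i _ => (S _ _).symm
    _ = Φ (ρr (ract (A.one ⊗ₜ[k] v) (A.bmap h))) := by rw [act1]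
    _ = Φ (TensorProduct.map₂ ract A.mul (ρr (A.one ⊗ₜ[k] v)) (A.comul (A.bmap h))) := by
        rw [hFA.crr (A.one ⊗ₜ[k] v) (A.bmap h)]
    _ = Φ (TensorProduct.map₂ ract A.mul (∑ p ∈ t, (A.one ⊗ₜ[k] p.1) ⊗ₜ[k] p.2)
          (∑ i ∈ s, TensorProduct.map A.bmap A.bmap (h1 i ⊗ₜ[k] h2 i))) := by
        rw [rho1, A.comul_bmap, hrep,
          map_sum (TensorProduct.map A.bmap A.bmap) (fun i => h1 i ⊗ₜ[k] h2 i) s]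
    _ = ∑ i ∈ s, TensorProduct.map (ractV.flip (A.bmap (h1 i)))
          (((A.mul.flip (A.bmap (A.bmap (h2 i)))).comp A.bmap)) (ρV v) := rhs

end HomHopf
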